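/- Let g be a Lie triple system over a field F with char F ≠ 2, 3 and N : g → g a Nijenhuis operator. Then for every integer k > 0 and all x1,x2,x3 ∈ g one has [x1,x2,x3]_{N^{k+1}} = ([·,·,·]_{N^k})_N(x1,x2,x3), where for a linear map M and a trilinear map b one sets b_M(x,y,z) := b(Mx,y,z) + b(x,My,z) + b(x,y,Mz) − M(b(x,y,z)), [·,·,·]_M denotes this construction applied to the bracket of g, and ([·,·,·]_{N^k})_N denotes the construction applied with the map N to the trilinear map [·,·,·]_{N^k}. -/
import Mathlib


/-- `N` is a Nijenhuis operator for the Lie triple system bracket `t`. -/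
def IsNijenhuis {F : Type*} [Field F] {g : Type*} [AddCommGroup g] [Module F g]
    (t : g →ₗ[F] g →ₗ[F] g →ₗ[F] g) (N : Module.End F g) : Prop :=
  (∀ x y z : g, t (N x) (N y) (N z) = 0) ∧
  (∀ x y z : g,
    N (N (t x y z)) =
      N (t (N x) y z) + N (t x (N y) z) + N (t x y (N z)) -
        t (N x) (N y) z - t (N x) y (N z) - t x (N y) (N z))

/-- The deformed trilinear map `b_M(x,y,z) = b(Mx,y,z)+b(x,My,z)+b(x,y,Mz)−M(b(x,y,z))`. -/
def deform {g : Type*} [AddCommGroup g] (b : g → g → g → g) (M : g → g) :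
    g → g → g → g :=
  fun x y z => b (M x) y z + b x (M y) z + b x y (M z) - M (b x y z)

/- STATEMENT 7: for a Nijenhuis operator N and k > 0,
[x1,x2,x3]_{N^{k+1}} = ([·,·,·]_{N^k})_N (x1,x2,x3). -/
set_option maxHeartbeats 1000000 in
theorem deform_pow_succ {F : Type*} [Field F]
    (hchar2 : (2 : F) ≠ 0) (hchar3 : (3 : F) ≠ 0)
    {g : Type*} [AddCommGroup g] [Module F g]
    (t : g →ₗ[F] g →ₗ[F] g →ₗ[F] g)
    (hskew : ∀ x y : g, t x x y = 0)
    (hjac : ∀ x y z : g, t x y z + t y z x + t z x y = 0)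
    (hfund : ∀ x y a b c : g,
      t x y (t a b c) = t (t x y a) b c + t a (t x y b) c + t a b (t x y c))
    (N : Module.End F g) (hN : IsNijenhuis t N) :
    ∀ k : ℕ, 0 < k → ∀ x1 x2 x3 : g,
      deform (fun x y z => t x y z) (⇑(N ^ (k + 1))) x1 x2 x3 =
        deform (deform (fun x y z => t x y z) (⇑(N ^ k))) (⇑N) x1 x2 x3 := by
  obtain ⟨hN1, hN2⟩ := hN
  intro k hk
  induction k, hk using Nat.le_induction with
  | base =>
    intro x y z
    simp only [deform, pow_succ, pow_zero, one_mul, Module.End.mul_apply, map_add, map_sub]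
    linear_combination (norm := abel) - hN2 x y z - hN2 x y z
  | succ n hn IH =>
    obtain ⟨m, rfl⟩ := Nat.exists_eq_succ_of_ne_zero (Nat.one_le_iff_ne_zero.mp hn)
    intro x y z
    have comm : ∀ v : g, N ((N ^ m) v) = (N ^ m) (N v) := fun v => by
      rw [← Module.End.mul_apply, ← pow_succ', pow_succ, Module.End.mul_apply]
    have ihn := congrArg (⇑N) (IH x y z)
    have h1 := hN2 ((N ^ (m + 1)) x) y z
    have h2 := hN2 x ((N ^ (m + 1)) y) z
    have h3 := hN2 x y ((N ^ (m + 1)) z)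
    have z1 := hN1 ((N ^ m) x) y z
    have z2 := hN1 x ((N ^ m) y) z
    have z3 := hN1 x y ((N ^ m) z)
    simp only [deform, Nat.succ_eq_add_one, pow_succ, pow_zero, one_mul, Module.End.mul_apply,
      map_add, map_sub, comm] at ihn h1 h2 h3 z1 z2 z3 ⊢
    linear_combination (norm := abel) ihn - h1 - h2 - h3 + z1 + z2 + z3
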